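/- Every perfectoid ring is reduced. Moreover, if A is perfectoid and a ∈ A admits a compatible system of p-power roots (a^{1/pⁿ}), then the a-power torsion A[a^∞] is annihilated by the ideal (a^{1/p^∞}) generated by all a^{1/pⁿ}. -/

import Mathlib

set_option linter.unusedSectionVars false

namespace Statement13Aux

section Poly


def kap (P j : ℕ) : ℕ := if j = 1 then 1 else P.choose j * P ^ (j - 2)

lemma kap_spec (P j : ℕ) (h1 : 1 ≤ j) : P.choose j * P ^ j = P ^ 2 * kap P j := by
  rcases eq_or_lt_of_le h1 with h | h2
  · rw [← h]
    simp [kap, Nat.choose_one_right]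
    ring
  · have hj : j ≠ 1 := by omega
    have : P ^ j = P ^ 2 * P ^ (j - 2) := by
      rw [← pow_add]
      congr 1
      omega
    rw [kap, if_neg hj, this]
    ring

lemma kap_ge_two (P j : ℕ) (h : 2 ≤ j) : kap P j = P.choose j * P ^ (j - 2) := by
  rw [kap, if_neg (by omega)]

variable {A : Type} [CommRing A]

lemma uv_pow (u v : A) (huv : u * v = 1) (P j : ℕ) (hj : j ≤ P) :
    u ^ P * v ^ j = u ^ (P - j) := by
  have hP : u ^ P = u ^ (P - j) * u ^ j := by
    rw [← pow_add]; congr 1; omega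
  rw [hP, mul_assoc, ← mul_pow, huv, one_pow, mul_one]

lemma core_dvd (P j : ℕ) (hP : 2 ≤ P) (h1 : 1 ≤ j) (hj : j ≤ P) (u v ξ Γ : A)
    (huv : u * v = 1) (hξ : ξ = Γ ^ P + P * u) :
    ξ ∣ (P.choose j : A) * ((-1 : A) ^ j * (u ^ P * v ^ j) * Γ ^ ((P - 2) * j))
        - (kap P j : A) * u ^ (P - 2) * Γ ^ (2 * (P - j)) := by
  rw [uv_pow u v huv P j hj]
  rcases eq_or_lt_of_le h1 with h | h2
  · -- j = 1
    rw [← h]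
    have e1 : (P - 2) * 1 = P - 2 := by omega
    have e2 : 2 * (P - 1) = (P - 2) + P := by omega
    have e3 : P - 1 = (P - 2) + 1 := by omega
    rw [e1, e2, e3, pow_add, pow_add, kap, if_pos rfl]
    simp only [Nat.choose_one_right, pow_one, Nat.cast_one]
    refine ⟨-(u ^ (P - 2) * Γ ^ (P - 2)), ?_⟩
    rw [hξ]
    ring
  · -- 2 ≤ j
    have h2' : 2 ≤ j := h2
    have e1 : (P - 2) * j = 2 * (P - j) + P * (j - 2) := by
      have hj2 : j = 2 + (j - 2) := by omega
      have hP2 : P = (P - 2) + 2 := by omega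
      have lin : (P - 2) * 2 = 2 * (P - j) + 2 * (j - 2) := by omega
      calc (P - 2) * j = (P - 2) * (2 + (j - 2)) := by rw [← hj2]
        _ = (P - 2) * 2 + (P - 2) * (j - 2) := by ring
        _ = 2 * (P - j) + 2 * (j - 2) + (P - 2) * (j - 2) := by rw [lin]
        _ = 2 * (P - j) + ((P - 2) + 2) * (j - 2) := by ring
        _ = 2 * (P - j) + P * (j - 2) := by rw [← hP2]
    rw [kap_ge_two P j h2', e1, pow_add, pow_mul, pow_mul]
    have hrw : (-1 : A) ^ j * u ^ (P - j) * (-((P : A) * u)) ^ (j - 2)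
        = (P : A) ^ (j - 2) * u ^ (P - 2) := by
      have hneg : (-((P : A) * u)) ^ (j - 2)
          = (-1 : A) ^ (j - 2) * ((P : A) ^ (j - 2) * u ^ (j - 2)) := by
        rw [neg_pow, mul_pow]
      rw [hneg]
      have hsign : (-1 : A) ^ j * (-1 : A) ^ (j - 2) = 1 := by
        rw [← pow_add]
        have : j + (j - 2) = 2 * (j - 1) := by omega
        rw [this, pow_mul]
        norm_num
      have hu : u ^ (P - j) * u ^ (j - 2) = u ^ (P - 2) := by
        rw [← pow_add]; congr 1; omega
      calc (-1 : A) ^ j * u ^ (P - j) * ((-1 : A) ^ (j - 2) * ((P : A) ^ (j - 2) * u ^ (j - 2)))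
          = ((-1 : A) ^ j * (-1 : A) ^ (j - 2)) * ((P : A) ^ (j - 2)) * (u ^ (P - j) * u ^ (j - 2)) := by
            ring
        _ = (P : A) ^ (j - 2) * u ^ (P - 2) := by rw [hsign, hu]; ring
    have hsub : ξ ∣ (Γ ^ P) ^ (j - 2) - (-((P : A) * u)) ^ (j - 2) := by
      have hdvd := sub_dvd_pow_sub_pow (Γ ^ P) (-((P : A) * u)) (j - 2)
      have heq : Γ ^ P - -((P : A) * u) = ξ := by rw [hξ]; ring
      rwa [heq] at hdvd
    obtain ⟨c0, hc0⟩ := hsub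
    refine ⟨(P.choose j : A) * ((Γ ^ 2) ^ (P - j)) * ((-1 : A) ^ j * u ^ (P - j) * c0), ?_⟩
    have key : (-1 : A) ^ j * u ^ (P - j) * (Γ ^ P) ^ (j - 2) - (P : A) ^ (j - 2) * u ^ (P - 2)
        = ξ * ((-1 : A) ^ j * u ^ (P - j) * c0) := by
      calc (-1 : A) ^ j * u ^ (P - j) * (Γ ^ P) ^ (j - 2) - (P : A) ^ (j - 2) * u ^ (P - 2)
          = (-1 : A) ^ j * u ^ (P - j) * ((Γ ^ P) ^ (j - 2) - (-((P : A) * u)) ^ (j - 2))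
            + ((-1 : A) ^ j * u ^ (P - j) * (-((P : A) * u)) ^ (j - 2)
               - (P : A) ^ (j - 2) * u ^ (P - 2)) := by ring
        _ = (-1 : A) ^ j * u ^ (P - j) * (ξ * c0) + 0 := by rw [← hc0, hrw, sub_self]
        _ = ξ * ((-1 : A) ^ j * u ^ (P - j) * c0) := by ring
    have expand : (P.choose j : A) * ((-1 : A) ^ j * u ^ (P - j) * ((Γ ^ 2) ^ (P - j) * (Γ ^ P) ^ (j - 2)))
        - (P.choose j : A) * (P : A) ^ (j - 2) * u ^ (P - 2) * (Γ ^ 2) ^ (P - j)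
        = (P.choose j : A) * (Γ ^ 2) ^ (P - j)
          * ((-1 : A) ^ j * u ^ (P - j) * (Γ ^ P) ^ (j - 2) - (P : A) ^ (j - 2) * u ^ (P - 2)) := by
      ring
    push_cast
    rw [expand, key]
    ring


lemma poly (P : ℕ) (hP : 2 ≤ P) (u v ξ T S Γ β : A) (huv : u * v = 1)
    (hξ : ξ = Γ ^ P + P * u) :
    ∃ M : A,
      (T * Γ ^ 2 * S + P * β) ^ P = (T * Γ ^ 2 * S) ^ P + P ^ 2 * M ∧
      ξ ∣ u ^ P * (T * S - Γ ^ (P - 2) * v * β) ^ P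
          - u ^ (P - 2) * (M + u ^ 2 * T ^ P * S ^ P) := by
  refine ⟨∑ i ∈ Finset.range P,
      (kap P (i + 1) : A) * (T * Γ ^ 2 * S) ^ (P - (i + 1)) * β ^ (i + 1), ?_, ?_⟩
  · rw [add_comm (T * Γ ^ 2 * S), add_pow, Finset.sum_range_succ']
    simp only [pow_zero, one_mul, Nat.sub_zero, Nat.choose_zero_right, Nat.cast_one, mul_one]
    rw [Finset.mul_sum, add_comm]
    congr 1
    apply Finset.sum_congr rfl
    intro i _
    have hspec := kap_spec P (i + 1) (by omega)
    have hcast : (P.choose (i + 1) : A) * (P : A) ^ (i + 1)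
        = (P : A) ^ 2 * (kap P (i + 1) : A) := by
      have := congrArg (Nat.cast : ℕ → A) hspec
      push_cast at this
      linear_combination this
    calc ((P : A) * β) ^ (i + 1) * (T * Γ ^ 2 * S) ^ (P - (i + 1)) * (P.choose (i + 1) : A)
        = ((P.choose (i + 1) : A) * (P : A) ^ (i + 1))
            * (β ^ (i + 1) * (T * Γ ^ 2 * S) ^ (P - (i + 1))) := by
          rw [mul_pow]; ring
      _ = ((P : A) ^ 2 * (kap P (i + 1) : A))
            * (β ^ (i + 1) * (T * Γ ^ 2 * S) ^ (P - (i + 1))) := by rw [hcast]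
      _ = (P : A) ^ 2 * ((kap P (i + 1) : A) * (T * Γ ^ 2 * S) ^ (P - (i + 1)) * β ^ (i + 1)) := by
          ring
  · have expand : (T * S - Γ ^ (P - 2) * v * β) ^ P
        = ∑ k ∈ Finset.range (P + 1),
            (-(Γ ^ (P - 2) * v * β)) ^ k * (T * S) ^ (P - k) * (P.choose k : A) := by
      rw [sub_eq_add_neg, add_comm, add_pow]
    rw [expand, Finset.mul_sum, Finset.sum_range_succ']
    simp only [pow_zero, one_mul, Nat.sub_zero, Nat.choose_zero_right, Nat.cast_one, mul_one]
    have hconst : u ^ P * (T * S) ^ P = u ^ (P - 2) * (u ^ 2 * T ^ P * S ^ P) := by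
      have hu : u ^ (P - 2) * u ^ 2 = u ^ P := by
        rw [← pow_add]; congr 1; omega
      rw [mul_pow T S]
      calc u ^ P * (T ^ P * S ^ P) = (u ^ (P - 2) * u ^ 2) * (T ^ P * S ^ P) := by rw [hu]
        _ = u ^ (P - 2) * (u ^ 2 * T ^ P * S ^ P) := by ring
    have rearrange :
        (∑ i ∈ Finset.range P,
            u ^ P * ((-(Γ ^ (P - 2) * v * β)) ^ (i + 1) * (T * S) ^ (P - (i + 1))
              * (P.choose (i + 1) : A)))
          + u ^ P * (T * S) ^ P
          - u ^ (P - 2) * ((∑ i ∈ Finset.range P,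
              (kap P (i + 1) : A) * (T * Γ ^ 2 * S) ^ (P - (i + 1)) * β ^ (i + 1))
            + u ^ 2 * T ^ P * S ^ P)
        = ∑ i ∈ Finset.range P,
            (u ^ P * ((-(Γ ^ (P - 2) * v * β)) ^ (i + 1) * (T * S) ^ (P - (i + 1))
              * (P.choose (i + 1) : A))
            - u ^ (P - 2) * ((kap P (i + 1) : A) * (T * Γ ^ 2 * S) ^ (P - (i + 1)) * β ^ (i + 1))) := by
      rw [Finset.sum_sub_distrib, mul_add, Finset.mul_sum]
      rw [hconst]
      ring
    rw [rearrange]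
    apply Finset.dvd_sum
    intro i _
    have hterm :
        u ^ P * ((-(Γ ^ (P - 2) * v * β)) ^ (i + 1) * (T * S) ^ (P - (i + 1))
          * (P.choose (i + 1) : A))
        - u ^ (P - 2) * ((kap P (i + 1) : A) * (T * Γ ^ 2 * S) ^ (P - (i + 1)) * β ^ (i + 1))
        = ((P.choose (i + 1) : A) * ((-1 : A) ^ (i + 1) * (u ^ P * v ^ (i + 1))
              * Γ ^ ((P - 2) * (i + 1)))
            - (kap P (i + 1) : A) * u ^ (P - 2) * Γ ^ (2 * (P - (i + 1))))
          * ((T * S) ^ (P - (i + 1)) * β ^ (i + 1)) := by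
      have hneg : (-(Γ ^ (P - 2) * v * β)) ^ (i + 1)
          = (-1 : A) ^ (i + 1) * (Γ ^ ((P - 2) * (i + 1)) * v ^ (i + 1) * β ^ (i + 1)) := by
        rw [neg_pow, mul_pow, mul_pow, ← pow_mul]
      have hG : (T * Γ ^ 2 * S) ^ (P - (i + 1))
          = Γ ^ (2 * (P - (i + 1))) * (T * S) ^ (P - (i + 1)) := by
        rw [show T * Γ ^ 2 * S = Γ ^ 2 * (T * S) by ring, mul_pow, ← pow_mul]
      rw [hneg, hG]
      ring
    rw [hterm]
    exact Dvd.dvd.mul_right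
      (core_dvd P (i + 1) hP (by omega) (by
        rename_i hi
        exact Nat.succ_le_of_lt (Finset.mem_range.mp hi)) u v ξ Γ huv hξ) _


lemma expand1 (P : ℕ) (hP : 2 ≤ P) (a β : A) :
    ∃ M : A, (a + P * β) ^ P = a ^ P + P ^ 2 * M := by
  refine ⟨∑ i ∈ Finset.range P,
      (kap P (i + 1) : A) * a ^ (P - (i + 1)) * β ^ (i + 1), ?_⟩
  rw [add_comm a, add_pow, Finset.sum_range_succ']
  simp only [pow_zero, one_mul, Nat.sub_zero, Nat.choose_zero_right, Nat.cast_one, mul_one]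
  rw [Finset.mul_sum, add_comm]
  congr 1
  apply Finset.sum_congr rfl
  intro i _
  have hspec := kap_spec P (i + 1) (by omega)
  have hcast : (P.choose (i + 1) : A) * (P : A) ^ (i + 1)
      = (P : A) ^ 2 * (kap P (i + 1) : A) := by
    have := congrArg (Nat.cast : ℕ → A) hspec
    push_cast at this
    linear_combination this
  calc ((P : A) * β) ^ (i + 1) * a ^ (P - (i + 1)) * (P.choose (i + 1) : A)
      = ((P.choose (i + 1) : A) * (P : A) ^ (i + 1)) * (β ^ (i + 1) * a ^ (P - (i + 1))) := by
        rw [mul_pow]; ring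
    _ = ((P : A) ^ 2 * (kap P (i + 1) : A)) * (β ^ (i + 1) * a ^ (P - (i + 1))) := by rw [hcast]
    _ = (P : A) ^ 2 * ((kap P (i + 1) : A) * a ^ (P - (i + 1)) * β ^ (i + 1)) := by ring


end Poly

section Witt




open WittVector

variable {p : ℕ} [hp : Fact p.Prime] {R : Type} [CommRing R] [CharP R p] [PerfectRing R p]

local notation "𝕎" => WittVector p R

lemma exists_verschiebung {x : 𝕎} (h : x.coeff 0 = 0) :
    ∃ v : 𝕎, verschiebung v = x ∧ ∀ i, v.coeff i = x.coeff (i + 1) := by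
  refine ⟨WittVector.mk p (fun n => x.coeff (n + 1)), ?_, ?_⟩
  · ext n
    cases n with
    | zero => rw [verschiebung_coeff_zero, h]
    | succ n => rw [verschiebung_coeff_succ]; simp [WittVector.coeff_mk]
  · intro i; simp [WittVector.coeff_mk]

lemma exists_p_mul {x : 𝕎} (h : x.coeff 0 = 0) :
    ∃ w : 𝕎, x = p * w ∧ ∀ i, w.coeff i = (frobeniusEquiv R p).symm (x.coeff (i + 1)) := by
  obtain ⟨v, hv, hvc⟩ := exists_verschiebung h
  refine ⟨WittVector.map ((frobeniusEquiv R p).symm : R →+* R) v, ?_, ?_⟩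
  · have hf : frobenius (WittVector.map ((frobeniusEquiv R p).symm : R →+* R) v) = v := by
      ext i
      rw [coeff_frobenius_charP]
      simp only [WittVector.map_coeff]
      exact frobeniusEquiv_symm_pow_p R p _
    calc x = verschiebung v := hv.symm
      _ = verschiebung (frobenius (WittVector.map ((frobeniusEquiv R p).symm : R →+* R) v)) := by
          rw [hf]
      _ = (WittVector.map ((frobeniusEquiv R p).symm : R →+* R) v) * p :=
          verschiebung_frobenius _
      _ = p * _ := mul_comm _ _
  · intro i
    simp only [WittVector.map_coeff]
    rw [hvc]
    rfl

lemma verschiebung_inj {v w : 𝕎} (h : verschiebung v = verschiebung w) : v = w := by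
  ext n
  have := congrArg (fun t : 𝕎 => t.coeff (n + 1)) h
  simpa [verschiebung_coeff_succ] using this

lemma p_mul_cancel {x y : 𝕎} (h : (p : 𝕎) * x = (p : 𝕎) * y) : x = y := by
  have hx : verschiebung (frobenius x) = verschiebung (frobenius y) := by
    rw [verschiebung_frobenius, verschiebung_frobenius, mul_comm x, mul_comm y]; exact h
  exact (frobenius_bijective p R).injective (verschiebung_inj hx)

lemma pow_p_mul_coeff_eq_zero : ∀ (k : ℕ) (w : 𝕎) (i : ℕ), i < k → ((p : 𝕎) ^ k * w).coeff i = 0 := by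
  intro k
  induction k with
  | zero => intro w i hi; omega
  | succ k ih =>
    intro w i hi
    have : (p : 𝕎) ^ (k + 1) * w = verschiebung (frobenius ((p : 𝕎) ^ k * w)) := by
      rw [verschiebung_frobenius]; ring
    rw [this]
    cases i with
    | zero => exact verschiebung_coeff_zero _
    | succ i =>
      rw [verschiebung_coeff_succ, coeff_frobenius_charP, ih w i (by omega)]
      exact zero_pow hp.out.ne_zero

lemma init_coeff (x : 𝕎) (k i : ℕ) :
    (init k x).coeff i = if i < k then x.coeff i else 0 := by
  simp [init, select, WittVector.coeff_mk]

lemma init_zero (k : ℕ) : init k (0 : 𝕎) = 0 := by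
  ext i
  simp [init_coeff, zero_coeff]

lemma init_eq_of_coeff_eq {x y : 𝕎} (k : ℕ) (h : ∀ i < k, x.coeff i = y.coeff i) :
    init k x = init k y := by
  ext n
  simp only [init_coeff]
  split
  · next hn => exact h n hn
  · rfl

lemma coeff_eq_of_init_eq {x y : 𝕎} (k i : ℕ) (hik : i < k) (h : init k x = init k y) :
    x.coeff i = y.coeff i := by
  have := congrArg (fun t : 𝕎 => t.coeff i) h
  simpa [init_coeff, hik] using this

lemma coeff_add_pk {x w : 𝕎} (k i : ℕ) (hik : i < k) :
    (x + (p : 𝕎) ^ k * w).coeff i = x.coeff i := by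
  have hz : init k ((p : 𝕎) ^ k * w) = init k (0 : 𝕎) := by
    apply init_eq_of_coeff_eq
    intro i hi
    rw [pow_p_mul_coeff_eq_zero k w i hi, zero_coeff]
  have : init k (x + (p : 𝕎) ^ k * w) = init k x := by
    rw [init_add, hz, init_zero, add_zero, init_init]
  exact coeff_eq_of_init_eq k i hik this

lemma exists_pk_mul {z : 𝕎} (k : ℕ) (h : ∀ i < k, z.coeff i = 0) :
    ∃ d, z = (p : 𝕎) ^ k * d := by
  induction k generalizing z with
  | zero => exact ⟨z, by simp⟩
  | succ k ih =>
    obtain ⟨w, hw, hwc⟩ := exists_p_mul (h 0 (by omega))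
    obtain ⟨d, hd⟩ := ih (z := w) (by
      intro i hi
      rw [hwc i, h (i + 1) (by omega), map_zero])
    exact ⟨d, by rw [hw, hd, pow_succ]; ring⟩

lemma exists_pk_sub {x y : 𝕎} (k : ℕ) (h : ∀ i < k, x.coeff i = y.coeff i) :
    ∃ d, y = x + (p : 𝕎) ^ k * d := by
  have : ∀ i < k, (y - x).coeff i = 0 := by
    intro i hi
    have h1 : init k (y - x) = init k (0 : 𝕎) := by
      rw [init_sub, init_eq_of_coeff_eq k (fun i hi => (h i hi).symm), sub_self, init_zero]
    simpa [zero_coeff] using coeff_eq_of_init_eq k i hi h1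
  obtain ⟨d, hd⟩ := exists_pk_mul k this
  exact ⟨d, by rw [← hd]; ring⟩

lemma limit (S : ℕ → 𝕎) (h : ∀ k, ∃ d, S (k + 1) = S k + (p : 𝕎) ^ k * d) :
    ∃ L, ∀ k, ∃ d, L = S k + (p : 𝕎) ^ k * d := by
  have stab : ∀ i m, i < m → (S m).coeff i = (S (i + 1)).coeff i := by
    intro i m
    induction m with
    | zero => omega
    | succ m ih =>
      intro him
      rcases Nat.lt_or_ge i m with hlt | hge
      · obtain ⟨d, hd⟩ := h m
        rw [hd, coeff_add_pk m i hlt, ih hlt]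
      · have : i + 1 = m + 1 := by omega
        rw [this]
  refine ⟨WittVector.mk p (fun i => (S (i + 1)).coeff i), ?_⟩
  intro k
  apply exists_pk_sub
  intro i hi
  rw [WittVector.coeff_mk]
  exact stab i k hi

lemma eq_zero_of_forall_pk {x : 𝕎} (h : ∀ k, ∃ d, x = (p : 𝕎) ^ k * d) : x = 0 := by
  ext i
  obtain ⟨d, hd⟩ := h (i + 1)
  rw [hd, pow_p_mul_coeff_eq_zero (i + 1) d i (by omega), zero_coeff]


noncomputable def rt (a : R) : R := (_root_.frobeniusEquiv R p).symm a

lemma rt_pow (a : R) : rt (p := p) a ^ p = a := frobeniusEquiv_symm_pow_p R p a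

lemma digit (x : 𝕎) : ∃ d, x = teichmuller p (x.coeff 0) + p * d := by
  have h : (x - teichmuller p (x.coeff 0)).coeff 0 = 0 := by
    have h1 : constantCoeff (x - teichmuller p (x.coeff 0)) = 0 := by
      rw [map_sub]
      simp [constantCoeff_apply, teichmuller_coeff_zero]
    simpa [constantCoeff_apply] using h1
  obtain ⟨w, hw, -⟩ := exists_p_mul h
  exact ⟨w, by rw [← hw]; ring⟩

lemma master (ξ : 𝕎) (ξ0 : R) (u : 𝕎) (hu : IsUnit u)
    (hξ : ξ = teichmuller p ξ0 + p * u) (y z : 𝕎) (h : y ^ p = ξ * z) :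
    ∃ b g h', y = ξ * b + (teichmuller p (rt (p := p) ξ0)) ^ 2 * g ∧ g ^ p = ξ * h' := by
  classical
  have hp2 : 2 ≤ p := hp.out.two_le
  obtain ⟨vu, hvu⟩ := hu
  obtain ⟨v, huv, hvu2⟩ : ∃ v : 𝕎, u * v = 1 ∧ v * u = 1 :=
    ⟨↑vu⁻¹, by rw [← hvu]; exact vu.mul_inv, by rw [← hvu]; exact vu.inv_mul⟩
  set u0 : R := constantCoeff u with hu0
  set v0 : R := constantCoeff v with hv0
  have hu0v0 : u0 * v0 = 1 := by
    rw [hu0, hv0, ← map_mul, huv, map_one]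
  have hξ0 : constantCoeff ξ = ξ0 := by
    rw [hξ, map_add, map_mul, map_natCast]
    simp [constantCoeff_apply, teichmuller_coeff_zero, CharP.cast_eq_zero]
  obtain ⟨y1, hy1⟩ := digit (p := p) y
  obtain ⟨z1, hz1⟩ := digit (p := p) z
  set y0 : R := y.coeff 0 with hy0d
  set z0 : R := z.coeff 0 with hz0d
  set s0 : R := z1.coeff 0 with hs0
  set c1 : R := rt (p := p) ξ0 with hc1
  set μ : R := rt (p := p) (-v0) with hμ
  set σ : R := rt (p := p) s0 with hσ
  have hc1p : c1 ^ p = ξ0 := rt_pow _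
  have hμp : μ ^ p = -v0 := rt_pow _
  have hσp : σ ^ p = s0 := rt_pow _
  have hTc1 : (teichmuller p c1) ^ p = teichmuller p ξ0 := by
    rw [← map_pow, hc1p]
  have hξΓ : ξ = (teichmuller p c1) ^ p + p * u := by rw [hTc1]; exact hξ
  -- step 1: coeff₀ of the main equation
  have hcoeff0 : y0 ^ p = ξ0 * z0 := by
    have h0 := congrArg constantCoeff h
    rw [map_pow, map_mul, hξ0] at h0
    exact h0
  -- the key `p·M = ⋯` identity, for any M satisfying the generic expansion
  have keyM : ∀ M : 𝕎, y ^ p = (teichmuller p y0) ^ p + (p : 𝕎) ^ 2 * M →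
      (p : 𝕎) * M = teichmuller p ξ0 * z1 + u * teichmuller p z0 + p * (u * z1) := by
    intro M hM
    have hexp : ξ * z = (teichmuller p y0) ^ p + (p : 𝕎) ^ 2 * M := by rw [← h, hM]
    have hy0p : (teichmuller p y0) ^ p = teichmuller p ξ0 * teichmuller p z0 := by
      rw [← map_pow, hcoeff0, map_mul]
    have hζ : ξ * z = teichmuller p ξ0 * teichmuller p z0
        + (p : 𝕎) * (teichmuller p ξ0 * z1 + u * teichmuller p z0 + p * (u * z1)) := by
      rw [hξ, hz1]
      push_cast
      ring
    have e2 := hexp.symm.trans hζ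
    rw [hy0p] at e2
    have e3 : (p : 𝕎) * ((p : 𝕎) * M)
        = (p : 𝕎) * (teichmuller p ξ0 * z1 + u * teichmuller p z0 + p * (u * z1)) := by
      linear_combination e2
    exact p_mul_cancel e3
  -- generic expansion to derive the z0 relation
  obtain ⟨M', hM'1⟩ := expand1 p hp2 (teichmuller p y0) y1
  have hyM' : y ^ p = (teichmuller p y0) ^ p + (p : 𝕎) ^ 2 * M' := by
    calc y ^ p = (teichmuller p y0 + p * y1) ^ p := by rw [← hy1]
      _ = _ := hM'1
  have hpM' := keyM M' hyM'
  have hccp : ∀ x : 𝕎, constantCoeff ((p : 𝕎) * x) = 0 := by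
    intro x
    rw [map_mul, map_natCast, CharP.cast_eq_zero R p, zero_mul]
  have h0 : ξ0 * s0 + u0 * z0 = 0 := by
    have h00 := congrArg constantCoeff hpM'
    rw [hccp, map_add, map_add, map_mul, map_mul, hccp] at h00
    have hTξ0 : constantCoeff (teichmuller p ξ0) = ξ0 := teichmuller_coeff_zero p ξ0
    rw [hTξ0] at h00
    rw [add_zero] at h00
    have : constantCoeff z1 = s0 := rfl
    rw [this] at h00
    have : constantCoeff (teichmuller p z0) = z0 := teichmuller_coeff_zero p z0
    rw [this] at h00
    exact h00.symm
  have hz0 : z0 = -(v0 * (ξ0 * s0)) := by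
    linear_combination v0 * h0 - z0 * hu0v0
  -- the value of y0
  have hy0 : y0 = μ * c1 ^ 2 * σ := by
    apply injective_pow_p (R := R) (p := p)
    rw [hcoeff0, hz0]
    have e : (μ * c1 ^ 2 * σ) ^ p = μ ^ p * (c1 ^ p) ^ 2 * σ ^ p := by ring
    rw [e, hμp, hσp, hc1p]
    ring
  have hTy0 : teichmuller p y0
      = teichmuller p μ * (teichmuller p c1) ^ 2 * teichmuller p σ := by
    rw [hy0, map_mul, map_mul, map_pow]
  -- the main invocation of `poly`
  obtain ⟨M, hM1, hM2⟩ := poly p hp2 u v ξ (teichmuller p μ) (teichmuller p σ)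
    (teichmuller p c1) y1 huv hξΓ
  have hyM : y ^ p = (teichmuller p y0) ^ p + (p : 𝕎) ^ 2 * M := by
    calc y ^ p
        = (teichmuller p μ * (teichmuller p c1) ^ 2 * teichmuller p σ + p * y1) ^ p := by
          rw [← hTy0, ← hy1]
      _ = (teichmuller p μ * (teichmuller p c1) ^ 2 * teichmuller p σ) ^ p
            + (p : 𝕎) ^ 2 * M := hM1
      _ = _ := by rw [← hTy0]
  have hpM := keyM M hyM
  -- auxiliary element N and the division by p
  set N : 𝕎 := u * teichmuller p (-v0) * teichmuller p s0 with hN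
  have hz0T : teichmuller p z0
      = teichmuller p (-v0) * teichmuller p ξ0 * teichmuller p s0 := by
    rw [hz0, show -(v0 * (ξ0 * s0)) = -v0 * ξ0 * s0 by ring, map_mul, map_mul]
  have hw0 : (z1 + N).coeff 0 = 0 := by
    have e : constantCoeff (z1 + N) = s0 + u0 * constantCoeff (teichmuller p (-v0)) * constantCoeff (teichmuller p s0) := by
      rw [map_add, hN, map_mul, map_mul]
      rfl
    have e2 : constantCoeff (teichmuller p (-v0)) = -v0 := teichmuller_coeff_zero p (-v0)
    have e3 : constantCoeff (teichmuller p s0) = s0 := teichmuller_coeff_zero p s0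
    rw [e2, e3] at e
    have e4 : constantCoeff (z1 + N) = (z1 + N).coeff 0 := rfl
    rw [e4] at e
    rw [e]
    linear_combination (-s0) * hu0v0
  obtain ⟨w', hw', -⟩ := exists_p_mul hw0
  -- M = [ξ0]·w' + u·z1
  have hMrel : M = teichmuller p ξ0 * w' + u * z1 := by
    apply p_mul_cancel
    have huz0 : u * teichmuller p z0 = teichmuller p ξ0 * N := by
      rw [hz0T, hN]; ring
    rw [hpM, huz0]
    linear_combination (teichmuller p ξ0) * hw'
  -- the key relation ξ·w' = M + u²·[μ]^p·[σ]^p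
  have hrel : M + u ^ 2 * (teichmuller p μ) ^ p * (teichmuller p σ) ^ p = ξ * w' := by
    have hTμp : (teichmuller p μ) ^ p = teichmuller p (-v0) := by rw [← map_pow, hμp]
    have hTσp : (teichmuller p σ) ^ p = teichmuller p s0 := by rw [← map_pow, hσp]
    rw [hMrel, hTμp, hTσp, hξ, hN] at *
    linear_combination u * hw'
  -- the element g
  set g : 𝕎 := teichmuller p μ * teichmuller p σ - teichmuller p c1 ^ (p - 2) * v * y1
    with hg
  have hpowc1 : (teichmuller p c1) ^ 2 * (teichmuller p c1) ^ (p - 2)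
      = teichmuller p ξ0 := by
    rw [← pow_add, show 2 + (p - 2) = p by omega, hTc1]
  have hmaster : y = ξ * (v * y1) + (teichmuller p c1) ^ 2 * g := by
    calc y = teichmuller p y0 + p * y1 := hy1
      _ = ξ * (v * y1) + (teichmuller p c1) ^ 2 * g := by
          rw [hg, hTy0, hξ]
          linear_combination (-(p : 𝕎) * y1) * huv + (v * y1) * hpowc1
  -- g^p is divisible by ξ
  have hdvd : ξ ∣ u ^ p * g ^ p := by
    rw [hrel] at hM2
    have e : u ^ p * g ^ p
        = (u ^ p * g ^ p - u ^ (p - 2) * (ξ * w')) + ξ * (u ^ (p - 2) * w') := by ring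
    rw [e]
    exact dvd_add hM2 (Dvd.intro _ rfl)
  obtain ⟨c, hc⟩ := hdvd
  refine ⟨v * y1, g, v ^ p * c, hmaster, ?_⟩
  calc g ^ p = (v ^ p * u ^ p) * g ^ p := by
        rw [← mul_pow, hvu2, one_pow, one_mul]
    _ = v ^ p * (u ^ p * g ^ p) := by ring
    _ = v ^ p * (ξ * c) := by rw [hc]
    _ = ξ * (v ^ p * c) := by ring




lemma main_div (ξ : 𝕎) (ξ0 : R) (u : 𝕎) (hu : IsUnit u)
    (hξ : ξ = teichmuller p ξ0 + p * u) (y z : 𝕎) (h : y ^ p = ξ * z) :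
    ∃ t, y = ξ * t := by
  classical
  have hp2 : 2 ≤ p := hp.out.two_le
  set π : 𝕎 := teichmuller p (rt (p := p) ξ0) with hπ
  have hπp : π ^ p = ξ - p * u := by
    rw [hπ, ← map_pow, rt_pow, hξ]; ring
  -- one step of the construction
  have step : ∀ G : 𝕎, (∃ zg, G ^ p = ξ * zg) →
      ∃ b g, G = ξ * b + π ^ 2 * g ∧ ∃ zg, g ^ p = ξ * zg := by
    rintro G ⟨zg, hzg⟩
    obtain ⟨b, g, h', h1, h2⟩ := master ξ ξ0 u hu hξ G zg hzg
    exact ⟨b, g, h1, ⟨h', h2⟩⟩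
  -- the state invariant
  set InvS : 𝕎 × 𝕎 × ℕ × ℕ → Prop := fun s =>
    (y = ξ * s.1 + (-((p : 𝕎) * u)) ^ s.2.2.1 * π ^ s.2.2.2 * s.2.1
      ∧ (∃ zg, s.2.1 ^ p = ξ * zg)) ∧ s.2.2.2 < p with hInvS
  have stepEx : ∀ s, InvS s → ∃ s',
      InvS s' ∧ p * s'.2.2.1 + s'.2.2.2 = p * s.2.2.1 + s.2.2.2 + 2
        ∧ s.2.2.1 ≤ s'.2.2.1 ∧ ∃ e, s'.1 = s.1 + (p : 𝕎) ^ s.2.2.1 * e := by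
    rintro ⟨T, G, m, r⟩ ⟨⟨hy, hG⟩, hr⟩
    obtain ⟨b, g, hbg, hg⟩ := step G hG
    simp only at hy hg hr ⊢
    have hpm : (-((p : 𝕎) * u)) ^ m = (p : 𝕎) ^ m * (-u) ^ m := by
      rw [show -((p : 𝕎) * u) = (p : 𝕎) * (-u) by ring, mul_pow]
    by_cases hcase : r + 2 < p
    · refine ⟨(T + (-((p : 𝕎) * u)) ^ m * π ^ r * b, g, m, r + 2), ⟨⟨?_, hg⟩, hcase⟩,
        by simp only; omega, by simp only; omega, ⟨(-u) ^ m * π ^ r * b, ?_⟩⟩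
      · simp only
        rw [hy, hbg, pow_add]
        ring
      · simp only
        rw [hpm]
        ring
    · have hr2 : r + 2 = (r + 2 - p) + p := by omega
      refine ⟨(T + (-((p : 𝕎) * u)) ^ m * π ^ r * b
          + (-((p : 𝕎) * u)) ^ m * π ^ (r + 2 - p) * g, g, m + 1, r + 2 - p),
        ⟨⟨?_, hg⟩, show r + 2 - p < p by omega⟩,
        show p * (m + 1) + (r + 2 - p) = p * m + r + 2 by rw [Nat.mul_succ]; omega,
        Nat.le_succ m,
        ⟨(-u) ^ m * π ^ r * b + (-u) ^ m * π ^ (r + 2 - p) * g, ?_⟩⟩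
      · simp only
        rw [hy, hbg]
        have e1 : π ^ r * π ^ 2 = π ^ (r + 2 - p) * π ^ p := by
          rw [← pow_add, ← pow_add, ← hr2]
        have e2 : π ^ p = ξ - (p : 𝕎) * u := hπp
        calc ξ * T + (-((p : 𝕎) * u)) ^ m * π ^ r * (ξ * b + π ^ 2 * g)
            = ξ * (T + (-((p : 𝕎) * u)) ^ m * π ^ r * b)
              + (-((p : 𝕎) * u)) ^ m * (π ^ r * π ^ 2) * g := by ring
          _ = ξ * (T + (-((p : 𝕎) * u)) ^ m * π ^ r * b)
              + (-((p : 𝕎) * u)) ^ m * (π ^ (r + 2 - p) * (ξ - (p : 𝕎) * u)) * g := by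
                rw [e1, e2]
          _ = ξ * (T + (-((p : 𝕎) * u)) ^ m * π ^ r * b
                + (-((p : 𝕎) * u)) ^ m * π ^ (r + 2 - p) * g)
              + (-((p : 𝕎) * u)) ^ (m + 1) * π ^ (r + 2 - p) * g := by
                rw [pow_succ]
                ring
      · simp only
        rw [hpm]
        ring
  -- iterate to build the sequence of states
  set stepFn : 𝕎 × 𝕎 × ℕ × ℕ → 𝕎 × 𝕎 × ℕ × ℕ := fun s =>
    if hs : InvS s then (stepEx s hs).choose else s with hstepFn
  set f : ℕ → 𝕎 × 𝕎 × ℕ × ℕ := fun k => stepFn^[k] (0, y, 0, 0) with hf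
  have hfsucc : ∀ k, f (k + 1) = stepFn (f k) := by
    intro k
    rw [hf]
    exact Function.iterate_succ_apply' stepFn k _
  have hInv : ∀ k, InvS (f k) ∧ p * (f k).2.2.1 + (f k).2.2.2 = 2 * k := by
    intro k
    induction k with
    | zero =>
      have hf0 : f 0 = (0, y, 0, 0) := rfl
      rw [hf0]
      refine ⟨⟨⟨?_, ⟨z, h⟩⟩, show (0 : ℕ) < p by omega⟩, show p * 0 + 0 = 2 * 0 by omega⟩
      show y = ξ * 0 + (-((p : 𝕎) * u)) ^ 0 * π ^ 0 * y
      ring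
    | succ k ih =>
      have hstep : f (k + 1) = (stepEx (f k) ih.1).choose := by
        rw [hfsucc, hstepFn]
        simp only [dif_pos ih.1]
      obtain ⟨hI, harith, -, -⟩ := (stepEx (f k) ih.1).choose_spec
      rw [hstep]
      exact ⟨hI, by omega⟩
  have hdelta : ∀ k, ∃ e, (f (k + 1)).1 = (f k).1 + (p : 𝕎) ^ ((f k).2.2.1) * e := by
    intro k
    have hstep : f (k + 1) = (stepEx (f k) (hInv k).1).choose := by
      rw [hfsucc, hstepFn]
      simp only [dif_pos (hInv k).1]
    obtain ⟨-, -, -, he⟩ := (stepEx (f k) (hInv k).1).choose_spec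
    rw [hstep]
    exact he
  have hmono : ∀ j k, j ≤ k → (f j).2.2.1 ≤ (f k).2.2.1 := by
    intro j k hjk
    induction k with
    | zero =>
      have : j = 0 := by omega
      rw [this]
    | succ k ih =>
      rcases Nat.lt_or_ge j (k + 1) with hlt | hge
      · have h1 := ih (by omega)
        have hstep : f (k + 1) = (stepEx (f k) (hInv k).1).choose := by
          rw [hfsucc, hstepFn]
          simp only [dif_pos (hInv k).1]
        obtain ⟨-, -, hm, -⟩ := (stepEx (f k) (hInv k).1).choose_spec
        rw [hstep]
        omega
      · have : j = k + 1 := by omega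
        rw [this]
  have hlb : ∀ K, K ≤ (f (p * (K + 1))).2.2.1 := by
    intro K
    have h1 := (hInv (p * (K + 1))).2
    have h2 := (hInv (p * (K + 1))).1.2
    set m := (f (p * (K + 1))).2.2.1
    set r := (f (p * (K + 1))).2.2.2
    -- p*m + r = 2*p*(K+1), r < p  ⟹ K ≤ m
    by_contra hK
    have hmK : m + 1 ≤ K := by omega
    have : p * m + r < p * K + p := by
      calc p * m + r < p * m + p := by omega
        _ = p * (m + 1) := by ring
        _ ≤ p * K := Nat.mul_le_mul_left p hmK
        _ ≤ p * K + p := by omega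
    rw [h1] at this
    have : 2 * (p * (K + 1)) < p * (K + 1) := by
      calc 2 * (p * (K + 1)) < p * K + p := this
        _ = p * (K + 1) := by ring
    omega
  -- the Cauchy sequence of partial divisors
  set Sq : ℕ → 𝕎 := fun K => (f (p * (K + 1))).1 with hSq
  have hrange : ∀ K j, p * (K + 1) ≤ j →
      ∃ d, (f j).1 = (f (p * (K + 1))).1 + (p : 𝕎) ^ K * d := by
    intro K j hj
    induction j with
    | zero =>
      exfalso
      have : 0 < p * (K + 1) := Nat.mul_pos (by omega) (by omega)
      omega
    | succ j ih =>
      rcases Nat.lt_or_ge j (p * (K + 1)) with hlt | hge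
      · have : j + 1 = p * (K + 1) := by omega
        rw [this]
        exact ⟨0, by ring⟩
      · obtain ⟨d, hd⟩ := ih hge
        obtain ⟨e, he⟩ := hdelta j
        have hmj : K ≤ (f j).2.2.1 := le_trans (hlb K) (hmono _ _ hge)
        have hpow : (p : 𝕎) ^ ((f j).2.2.1) = (p : 𝕎) ^ K * (p : 𝕎) ^ ((f j).2.2.1 - K) := by
          rw [← pow_add]
          congr 1
          omega
        refine ⟨d + (p : 𝕎) ^ ((f j).2.2.1 - K) * e, ?_⟩
        rw [he, hd, hpow]
        ring
  have hCauchy : ∀ K, ∃ d, Sq (K + 1) = Sq K + (p : 𝕎) ^ K * d := by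
    intro K
    exact hrange K (p * (K + 2)) (Nat.mul_le_mul_left p (by omega))
  obtain ⟨L, hL⟩ := limit Sq hCauchy
  refine ⟨L, ?_⟩
  have hfinal : ∀ K, ∃ dd, y - ξ * L = (p : 𝕎) ^ K * dd := by
    intro K
    obtain ⟨d, hd⟩ := hL K
    have hy := (hInv (p * (K + 1))).1.1.1
    set m := (f (p * (K + 1))).2.2.1 with hm
    set r := (f (p * (K + 1))).2.2.2 with hr
    set G := (f (p * (K + 1))).2.1 with hG
    have hmK : K ≤ m := hlb K
    have hpow : (-((p : 𝕎) * u)) ^ m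
        = (p : 𝕎) ^ K * ((p : 𝕎) ^ (m - K) * (-u) ^ m) := by
      have e : (p : 𝕎) ^ m = (p : 𝕎) ^ K * (p : 𝕎) ^ (m - K) := by
        rw [← pow_add]
        congr 1
        omega
      calc (-((p : 𝕎) * u)) ^ m = (p : 𝕎) ^ m * (-u) ^ m := by
            rw [show -((p : 𝕎) * u) = (p : 𝕎) * (-u) by ring, mul_pow]
        _ = (p : 𝕎) ^ K * ((p : 𝕎) ^ (m - K) * (-u) ^ m) := by rw [e]; ring
    refine ⟨(p : 𝕎) ^ (m - K) * (-u) ^ m * π ^ r * G - ξ * d, ?_⟩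
    rw [hd]
    calc y - ξ * (Sq K + (p : 𝕎) ^ K * d)
        = (y - ξ * Sq K) - (p : 𝕎) ^ K * (ξ * d) := by ring
      _ = (-((p : 𝕎) * u)) ^ m * π ^ r * G - (p : 𝕎) ^ K * (ξ * d) := by
          rw [hy, hSq]
          ring
      _ = (p : 𝕎) ^ K * ((p : 𝕎) ^ (m - K) * (-u) ^ m * π ^ r * G - ξ * d) := by
          rw [hpow]
          ring
  have := eq_zero_of_forall_pk (x := y - ξ * L) hfinal
  linear_combination this

end Witt

end Statement13Aux

/-- **Perfectoid rings are reduced, and `a`-power torsion is almost zero.**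
A perfectoid ring `A = W(R)/(ξ)` (with `R` a perfect `𝔽_p`-algebra and `ξ` distinguished,
`ξ = [ξ₀] + p·u` with `u` a unit) is reduced.  Moreover if `a ∈ A` has a compatible
system of `p`-power roots `(a^{1/pⁿ})ₙ`, then the `a`-power torsion of `A` is annihilated
by every `a^{1/pᵏ}`. -/
theorem statement13 {p : ℕ} [Fact p.Prime] {R : Type} [CommRing R] [CharP R p]
    [PerfectRing R p] (ξ : WittVector p R) (ξ0 : R) (u : WittVector p R) (hu : IsUnit u)
    (hξ : ξ = WittVector.teichmuller p ξ0 + p * u) :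
    IsReduced (WittVector p R ⧸ Ideal.span {ξ}) ∧
    ∀ a : ℕ → WittVector p R ⧸ Ideal.span {ξ},
      (∀ n, (a (n + 1)) ^ p = a n) →
      ∀ x : WittVector p R ⧸ Ideal.span {ξ},
        (∃ n : ℕ, a 0 ^ n * x = 0) → ∀ k : ℕ, a k * x = 0 := by
  have hp1 : 1 < p := Fact.out (p := p.Prime) |>.one_lt
  -- the key property: `p`-th powers detect zero
  have key : ∀ x : WittVector p R ⧸ Ideal.span {ξ}, x ^ p = 0 → x = 0 := by
    intro x hx
    obtain ⟨y, rfl⟩ := Ideal.Quotient.mk_surjective x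
    have hmem : y ^ p ∈ Ideal.span {ξ} := by
      rw [← Ideal.Quotient.eq_zero_iff_mem, map_pow]
      exact hx
    rw [Ideal.mem_span_singleton] at hmem
    obtain ⟨z, hz⟩ := hmem
    obtain ⟨t, ht⟩ := Statement13Aux.main_div ξ ξ0 u hu hξ y z hz
    rw [Ideal.Quotient.eq_zero_iff_mem, ht, Ideal.mem_span_singleton]
    exact ⟨t, rfl⟩
  have keyk : ∀ (k : ℕ) (x : WittVector p R ⧸ Ideal.span {ξ}), x ^ p ^ k = 0 → x = 0 := by
    intro k
    induction k with
    | zero => intro x hx; simpa using hx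
    | succ k ih =>
      intro x hx
      have hxk : (x ^ p) ^ p ^ k = 0 := by
        rw [← pow_mul]
        rw [show p * p ^ k = p ^ (k + 1) by rw [pow_succ]; ring]
        exact hx
      exact key x (ih (x ^ p) hxk)
  have hred : IsReduced (WittVector p R ⧸ Ideal.span {ξ}) := by
    refine ⟨fun x hx => ?_⟩
    obtain ⟨n, hn⟩ := hx
    have hk : n ≤ p ^ n := Nat.le_of_lt (Nat.lt_pow_self hp1)
    apply keyk n
    rw [show p ^ n = n + (p ^ n - n) by omega, pow_add, hn, zero_mul]
  refine ⟨hred, ?_⟩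
  intro a ha x hx k
  obtain ⟨n, hn⟩ := hx
  have hak : ∀ m, a m ^ (p ^ m) = a 0 := by
    intro m
    induction m with
    | zero => simp
    | succ m ih =>
      calc a (m + 1) ^ p ^ (m + 1) = (a (m + 1) ^ p) ^ p ^ m := by
            rw [← pow_mul]
            rw [show p * p ^ m = p ^ (m + 1) by rw [pow_succ]; ring]
        _ = a m ^ p ^ m := by rw [ha m]
        _ = a 0 := ih
  have hnil : (a k * x) ^ (n * p ^ k + 1) = 0 := by
    rw [mul_pow]
    have h1 : (a k) ^ (n * p ^ k + 1) = ((a k) ^ (p ^ k)) ^ n * a k := by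
      rw [← pow_mul, ← pow_succ]
      congr 1
      ring
    rw [h1, hak]
    calc a 0 ^ n * a k * x ^ (n * p ^ k + 1)
        = (a 0 ^ n * x) * (a k * x ^ (n * p ^ k)) := by ring
      _ = 0 := by rw [hn, zero_mul]
  exact IsNilpotent.eq_zero ⟨n * p ^ k + 1, hnil⟩
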